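/- Let p ≥ 0, q > 0, u^A, u^B > 0 with q·u^B − p > u^A. Let A have CDF F_A(x) = 1 − u^A/(q·u^B) + x/(q·u^B) for x ∈ [0, u^A], F_A(x) = 1 for x > u^A, and let B be uniform on [p/q, (u^A+p)/q]. Then the expected payoff of Player B, E[u^B·F_A(q·B − p) − B], equals u^B − (u^A + p)/q, and for every pure bid x^B ∈ [0, u^B], u^B·F_A(q·x^B − p) − x^B ≤ u^B − (u^A + p)/q. -/

import Mathlib

open MeasureTheory ProbabilityTheory
open scoped ProbabilityTheory

/-- Case `q·u^B − p > u^A`: with `F_A` as Player A's equilibrium distribution and `B`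
uniform on `[p/q, (u^A+p)/q]`, Player B's expected payoff `E[u^B·F_A(q·B − p) − B]`
equals `u^B − (u^A + p)/q`, and every pure bid `x^B ∈ [0, u^B]` yields at most that. -/
theorem stmt_6 {Ω : Type*} [MeasureSpace Ω] [IsProbabilityMeasure (ℙ : Measure Ω)]
    (uA uB p q : ℝ) (huA : 0 < uA) (huB : 0 < uB) (hq : 0 < q) (hp : 0 ≤ p)
    (hcase : uA < q * uB - p)
    (FA : ℝ → ℝ)
    (hFA : FA = fun x =>
      if x < 0 then 0
      else if x ≤ uA then 1 - uA / (q * uB) + x / (q * uB)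
      else 1)
    (B : Ω → ℝ) (hBmeas : Measurable B)
    (hBcdf : ∀ x : ℝ, ℙ {ω | B ω ≤ x} = ENNReal.ofReal
      (min (max ((q * x - p) / uA) 0) 1)) :
    (∫ ω, (uB * FA (q * B ω - p) - B ω) ∂ℙ) = uB - (uA + p) / q ∧
    ∀ xB : ℝ, 0 ≤ xB → xB ≤ uB →
      uB * FA (q * xB - p) - xB ≤ uB - (uA + p) / q := by
  have hq' : q ≠ 0 := ne_of_gt hq
  have huB' : uB ≠ 0 := ne_of_gt huB
  have hquB : (0:ℝ) < q * uB := mul_pos hq huB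
  -- key pointwise computation on the "middle" region
  have key : ∀ x : ℝ, 0 ≤ q * x - p → q * x - p ≤ uA →
      uB * FA (q * x - p) - x = uB - (uA + p) / q := by
    intro x h1 h2
    rw [hFA]
    simp only [not_lt.mpr h1, if_neg, if_false]
    rw [if_pos h2]
    field_simp
    ring
  constructor
  · -- the integral part
    have hS : ℙ {ω | B ω ≤ p / q} = 0 := by
      have := hBcdf (p / q)
      rw [this]
      have : q * (p / q) - p = 0 := by field_simp; ring
      rw [this]
      simp
    have hle : ℙ {ω | B ω ≤ (uA + p) / q} = 1 := by
      have := hBcdf ((uA + p) / q)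
      rw [this]
      have h1 : q * ((uA + p) / q) - p = uA := by field_simp; ring
      rw [h1, div_self (ne_of_gt huA)]
      simp
    have hT : ℙ {ω | (uA + p) / q < B ω} = 0 := by
      have hmeas : MeasurableSet {ω | B ω ≤ (uA + p) / q} :=
        hBmeas measurableSet_Iic
      have hcompl : {ω | (uA + p) / q < B ω} = {ω | B ω ≤ (uA + p) / q}ᶜ := by
        ext ω; simp [not_le]
      rw [hcompl, measure_compl hmeas (measure_ne_top _ _), hle,
        measure_univ]
      simp
    have hae : ∀ᵐ ω ∂(ℙ : Measure Ω),
        uB * FA (q * B ω - p) - B ω = uB - (uA + p) / q := by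
      have h1 : ∀ᵐ ω ∂(ℙ : Measure Ω), ¬ (B ω ≤ p / q) :=
        (ae_iff).mpr (by simpa using hS)
      have h2 : ∀ᵐ ω ∂(ℙ : Measure Ω), ¬ ((uA + p) / q < B ω) :=
        (ae_iff).mpr (by simpa using hT)
      filter_upwards [h1, h2] with ω hω1 hω2
      have hb1 : p / q < B ω := not_le.mp hω1
      have hb2 : B ω ≤ (uA + p) / q := not_lt.mp hω2
      apply key
      · have := (div_lt_iff₀ hq).mp hb1
        nlinarith
      · have := (le_div_iff₀ hq).mp hb2
        nlinarith
    rw [integral_congr_ae hae, integral_const]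
    simp
  · -- pure bid bound
    intro xB h0 hub
    have hcpos : 0 < uB - (uA + p) / q := by
      rw [sub_pos, div_lt_iff₀ hq]
      nlinarith
    rcases lt_or_ge (q * xB - p) 0 with h | h
    · rw [hFA]
      simp only [if_pos h]
      nlinarith
    · rcases le_or_gt (q * xB - p) uA with h2 | h2
      · rw [key xB h h2]
      · rw [hFA]
        simp only [not_lt.mpr h, if_neg, if_false, not_le.mpr h2]
        have : (uA + p) / q < xB := by
          rw [div_lt_iff₀ hq]; nlinarith
        nlinarith
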